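/- arXiv:1604.02967 — 2 statements merged into one kernel-verified Lean document; each statement's English description precedes it below -/
import Mathlib

section
/- Let p be an odd prime and m, k positive integers such that m/gcd(k,m) is odd. Let S denote the set of nonzero squares in F_{p^m}. Then the map x ↦ x^{p^k + 1} from F_{p^m}^* to F_{p^m}^* is exactly 2-to-1 onto S; that is, every element of S has exactly two preimages, and no nonsquare is in the image. -/
open scoped Classical

lemma gcd_two_mul_left_of_odd_div {k m : ℕ} (hm : 0 < m) (h : Odd (m / Nat.gcd k m)) :
    Nat.gcd (2 * k) m = Nat.gcd k m := by
  set d := Nat.gcd k m with hd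
  have hdpos : 0 < d := Nat.gcd_pos_of_pos_right k hm
  have h1 : d ∣ Nat.gcd (2 * k) m :=
    Nat.dvd_gcd ((Nat.gcd_dvd_left k m).trans (dvd_mul_left k 2)) (Nat.gcd_dvd_right k m)
  have h2 : Nat.gcd (2 * k) m ∣ 2 * d := by
    have : Nat.gcd (2 * k) m ∣ Nat.gcd (2 * k) (2 * m) :=
      Nat.dvd_gcd (Nat.gcd_dvd_left _ _) ((Nat.gcd_dvd_right _ _).mul_left 2)
    rwa [Nat.gcd_mul_left] at this
  obtain ⟨c, hc⟩ := h1
  have hc2 : c ∣ 2 := by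
    have := h2
    rw [hc, mul_comm 2 d] at this
    exact (Nat.mul_dvd_mul_iff_left hdpos).mp this
  rcases (Nat.dvd_prime Nat.prime_two).mp hc2 with rfl | rfl
  · rw [hc, mul_one]
  · exfalso
    have hdm : d * 2 ∣ m := hc ▸ Nat.gcd_dvd_right (2 * k) m
    have : 2 ∣ m / d := (Nat.dvd_div_iff_mul_dvd (Nat.gcd_dvd_right k m)).mpr hdm
    rw [Nat.odd_iff] at h
    omega

lemma gcd_pow_add_one_pow_sub_one (p m k : ℕ) (hp : p.Prime) (hodd : Odd p)
    (hm : 0 < m) (hk : 0 < k) (h : Odd (m / Nat.gcd k m)) :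
    Nat.gcd (p ^ k + 1) (p ^ m - 1) = 2 := by
  set g := Nat.gcd (p ^ k + 1) (p ^ m - 1) with hg
  have hp1 : 1 ≤ p ^ m := Nat.one_le_pow _ _ hp.pos
  have h2g : 2 ∣ g := by
    refine Nat.dvd_gcd ?_ ?_
    · exact (hodd.pow.add_one).two_dvd
    · exact (Nat.Odd.sub_odd hodd.pow odd_one).two_dvd
  have hA : (p : ZMod g) ^ k = -1 := by
    have h0 : ((p ^ k + 1 : ℕ) : ZMod g) = 0 :=
      (ZMod.natCast_eq_zero_iff _ _).mpr (Nat.gcd_dvd_left _ _)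
    push_cast at h0
    linear_combination h0
  have hB : (p : ZMod g) ^ m = 1 := by
    have h0 : ((p ^ m - 1 : ℕ) : ZMod g) = 0 :=
      (ZMod.natCast_eq_zero_iff _ _).mpr (Nat.gcd_dvd_right _ _)
    rw [Nat.cast_sub hp1] at h0
    push_cast at h0
    linear_combination h0
  have h2k : (p : ZMod g) ^ (2 * k) = 1 := by
    rw [mul_comm, pow_mul, hA, neg_one_sq]
  have hdpow : (p : ZMod g) ^ Nat.gcd k m = 1 := by
    have := pow_gcd_eq_one.mpr ⟨h2k, hB⟩
    rwa [gcd_two_mul_left_of_odd_div hm h] at this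
  have hkpow : (p : ZMod g) ^ k = 1 := by
    obtain ⟨c, hc⟩ := Nat.gcd_dvd_left k m
    rw [hc, pow_mul, hdpow, one_pow]
  have h20 : ((2 : ℕ) : ZMod g) = 0 := by
    push_cast
    linear_combination hA - hkpow
  have hg2 : g ∣ 2 := (ZMod.natCast_eq_zero_iff _ _).mp h20
  exact Nat.dvd_antisymm hg2 h2g

theorem power_map_two_to_one_onto_squares (p m k : ℕ) (hp : p.Prime) (hodd : Odd p)
    (hm : 0 < m) (hk : 0 < k) (h : Odd (m / Nat.gcd k m))
    (F : Type*) [Field F] [Fintype F] (hcard : Fintype.card F = p ^ m)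
    (s : F) (hs : s ≠ 0) :
    (Finset.univ.filter (fun x : F => x ^ (p ^ k + 1) = s)).card
      = if IsSquare s then 2 else 0 := by
  have hgcd : Nat.gcd (p ^ k + 1) (p ^ m - 1) = 2 :=
    gcd_pow_add_one_pow_sub_one p m k hp hodd hm hk h
  set n := p ^ k + 1 with hn
  set N := p ^ m - 1 with hN
  have hEven : Even n := hodd.pow.add_one
  have hnne : n ≠ 0 := by positivity
  have hcardu : Fintype.card Fˣ = N := by rw [Fintype.card_units, hcard]
  by_cases hsq : IsSquare s
  · rw [if_pos hsq]
    obtain ⟨t, hts⟩ := hsq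
    have ht : t ≠ 0 := by rintro rfl; rw [mul_zero] at hts; exact hs hts
    set w : Fˣ := Units.mk0 t ht with hw
    have hbez : (2 : ℤ) = n * Nat.gcdA n N + N * Nat.gcdB n N := by
      have := Nat.gcd_eq_gcd_ab n N
      rw [hgcd] at this
      exact_mod_cast this
    set a := Nat.gcdA n N with ha
    set x₀ : Fˣ := w ^ a with hx₀
    have hwN : w ^ (N : ℤ) = 1 := by
      rw [zpow_natCast, ← hcardu, pow_card_eq_one]
    have hx₀n : x₀ ^ n = w ^ 2 := by
      have h1 : a * (n : ℤ) = 2 - (N : ℤ) * Nat.gcdB n N := by linarith [hbez]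
      calc x₀ ^ n = (w ^ a) ^ ((n : ℕ) : ℤ) := by rw [hx₀, zpow_natCast]
        _ = w ^ (a * (n : ℤ)) := (zpow_mul w a (n : ℤ)).symm
        _ = w ^ ((2 : ℤ) - (N : ℤ) * Nat.gcdB n N) := by rw [h1]
        _ = w ^ (2 : ℤ) / (w ^ ((N : ℤ))) ^ (Nat.gcdB n N) := by
              rw [zpow_sub, zpow_mul, div_eq_mul_inv]
        _ = w ^ 2 := by rw [hwN, one_zpow, div_one, ← zpow_natCast]; norm_num
    have hx₀s : (x₀ : F) ^ n = s := by
      have := congrArg (Units.val) hx₀n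
      rw [Units.val_pow_eq_pow_val, Units.val_pow_eq_pow_val] at this
      rw [this, hw, Units.val_mk0, hts, sq]
    have hx0ne : (x₀ : F) ≠ 0 := Units.ne_zero x₀
    have h2F : (2 : F) ≠ 0 := by
      intro h2
      have hdvd : ringChar F ∣ 2 :=
        (CharP.cast_eq_zero_iff F (ringChar F) 2).mp (by exact_mod_cast h2)
      have h2card : 2 ∣ Fintype.card F := by
        refine (prime_dvd_char_iff_dvd_card 2).mp ?_
        rcases (Nat.dvd_prime Nat.prime_two).mp hdvd with h1 | h1
        · exact absurd h1 (CharP.ringChar_ne_one (R := F))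
        · rw [h1]
      rw [hcard] at h2card
      have hoddpm : Odd (p ^ m) := hodd.pow
      rw [Nat.odd_iff] at hoddpm
      omega
    have hne : (x₀ : F) ≠ -(x₀ : F) := by
      intro heq
      have : (2 : F) * (x₀ : F) = 0 := by linear_combination heq
      rcases mul_eq_zero.mp this with h1 | h1
      · exact h2F h1
      · exact hx0ne h1
    have hset : Finset.univ.filter (fun x : F => x ^ n = s)
        = {(x₀ : F), -(x₀ : F)} := by
      ext x
      simp only [Finset.mem_filter, Finset.mem_univ, true_and, Finset.mem_insert,
        Finset.mem_singleton]
      constructor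
      · intro hx
        have hx0 : x ≠ 0 := by
          rintro rfl
          rw [zero_pow hnne] at hx
          exact hs hx.symm
        set y := x / (x₀ : F) with hy
        have hyn : y ^ n = 1 := by rw [hy, div_pow, hx, hx₀s, div_self hs]
        have hyN : y ^ N = 1 := by
          have hy0 : y ≠ 0 := div_ne_zero hx0 hx0ne
          have := FiniteField.pow_card_sub_one_eq_one y hy0
          rwa [hcard] at this
        have hy2 : y ^ 2 = 1 := by
          have := pow_gcd_eq_one.mpr ⟨hyn, hyN⟩
          rwa [hgcd] at this
        have hfact : (y - 1) * (y + 1) = 0 := by linear_combination hy2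
        rcases mul_eq_zero.mp hfact with h1 | h1
        · left
          have hy1 : y = 1 := by linear_combination h1
          rw [hy] at hy1
          field_simp at hy1
          exact hy1
        · right
          have hy1 : y = -1 := by linear_combination h1
          rw [hy] at hy1
          field_simp at hy1
          exact hy1
      · rintro (rfl | rfl)
        · exact hx₀s
        · rw [hEven.neg_pow, hx₀s]
    rw [hset, Finset.card_insert_of_notMem (by simpa using hne), Finset.card_singleton]
  · rw [if_neg hsq]
    rw [Finset.card_eq_zero, Finset.filter_eq_empty_iff]
    intro x _
    intro hx
    obtain ⟨r, hr⟩ := hEven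
    exact hsq ⟨x ^ r, by rw [← hx, hr, pow_add]⟩
end

section
/- Let p be an odd prime, m, k positive integers with m/gcd(k,m) ≥ 3 odd, e = gcd(k,m), h = m/e. For any (u,v) ∈ F_{p^m}² \ {(0,0)}, at least one of the quadratic forms Q_{u,v}(x) = Tr^m_e(u x^{p^k+1} + v x²) and Q_{u,−v}(x) = Tr^m_e(u x^{p^k+1} − v x²) over F_{p^e} has full rank h. -/
noncomputable def relTrace (p e h : ℕ) {F : Type*} [Field F] (x : F) : F :=
  ∑ i ∈ Finset.range h, x ^ p ^ (e * i)

section helpers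
variable {p e h : ℕ} {F : Type*} [Field F]

lemma relTrace_add [Fact p.Prime] [CharP F p] (a b : F) :
    relTrace p e h (a + b) = relTrace p e h a + relTrace p e h b := by
  unfold relTrace
  rw [← Finset.sum_add_distrib]
  exact Finset.sum_congr rfl fun i _ => add_pow_char_pow ..

lemma relTrace_sub [Fact p.Prime] [CharP F p] (a b : F) :
    relTrace p e h (a - b) = relTrace p e h a - relTrace p e h b := by
  unfold relTrace
  rw [← Finset.sum_sub_distrib]
  exact Finset.sum_congr rfl fun i _ => sub_pow_char_pow_of_commute _ _ (Commute.all a b)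

lemma relTrace_frob {m : ℕ} (hm : m = e * h) (hF : ∀ x : F, x ^ p ^ m = x) (a : F) :
    relTrace p e h (a ^ p ^ e) = relTrace p e h a := by
  unfold relTrace
  have key : ∀ i : ℕ, (a ^ p ^ e) ^ p ^ (e * i) = a ^ p ^ (e * (i + 1)) := by
    intro i
    rw [← pow_mul, ← pow_add, mul_add, mul_one, add_comm]
  rw [Finset.sum_congr rfl fun i _ => key i]
  have h1 := Finset.sum_range_succ' (fun i => a ^ p ^ (e * i)) h
  have h2 := Finset.sum_range_succ (fun i => a ^ p ^ (e * i)) h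
  have h3 : a ^ p ^ (e * h) = a ^ p ^ (e * 0) := by
    rw [← hm, hF a, mul_zero, pow_zero, pow_one]
  rw [h3] at h2
  linear_combination h2 - h1

lemma relTrace_frob_iter {m : ℕ} (hm : m = e * h) (hF : ∀ x : F, x ^ p ^ m = x) (a : F)
    (t : ℕ) : relTrace p e h (a ^ p ^ (e * t)) = relTrace p e h a := by
  induction t with
  | zero => simp
  | succ n ih =>
      have : a ^ p ^ (e * (n + 1)) = (a ^ p ^ (e * n)) ^ p ^ e := by
        rw [← pow_mul, ← pow_add, mul_add, mul_one]
      rw [this, relTrace_frob hm hF, ih]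

lemma relTrace_frob_dvd {m : ℕ} (hm : m = e * h) (hF : ∀ x : F, x ^ p ^ m = x) (a : F)
    {n : ℕ} (hn : e ∣ n) : relTrace p e h (a ^ p ^ n) = relTrace p e h a := by
  obtain ⟨t, rfl⟩ := hn
  exact relTrace_frob_iter hm hF a t

lemma pow_pm_iter {m : ℕ} (hF : ∀ x : F, x ^ p ^ m = x) (c : ℕ) (x : F) :
    x ^ p ^ (m * c) = x := by
  induction c with
  | zero => simp
  | succ n ih =>
      have : x ^ p ^ (m * (n + 1)) = (x ^ p ^ (m * n)) ^ p ^ m := by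
        rw [← pow_mul, ← pow_add, mul_add, mul_one]
      rw [this, ih, hF]

end helpers

open Polynomial in
lemma relTrace_exists_ne_zero {p e h m : ℕ} {F : Type*} [Field F] [Fintype F]
    (hp : p.Prime) (he : 0 < e) (hh : 0 < h) (hm : m = e * h)
    (hcard : Fintype.card F = p ^ m) : ∃ x : F, relTrace p e h x ≠ 0 := by
  set P : F[X] := ∑ i ∈ Finset.range h, (X : F[X]) ^ p ^ (e * i) with hP
  have heval : ∀ x : F, P.eval x = relTrace p e h x := by
    intro x; simp [hP, relTrace, Polynomial.eval_finset_sum]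
  have hPne : P ≠ 0 := by
    intro h0
    have hc : P.coeff 1 = 1 := by
      rw [hP, Polynomial.finset_sum_coeff]
      rw [Finset.sum_eq_single 0]
      · simp
      · intro i hi hine
        rw [Polynomial.coeff_X_pow]
        have : p ^ (e * i) ≠ 1 := by
          have : 0 < e * i := Nat.mul_pos he (Nat.pos_of_ne_zero hine)
          have := Nat.one_lt_pow (by omega : e * i ≠ 0) hp.one_lt
          omega
        simp [Ne.symm this]
      · intro habs; simp at habs; omega
    rw [h0] at hc; simp at hc
  have hdeg : P.natDegree < Fintype.card F := by
    have h1 : P.natDegree ≤ p ^ (e * (h - 1)) := by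
      apply Polynomial.natDegree_sum_le_of_forall_le
      intro i hi
      rw [Polynomial.natDegree_X_pow]
      exact Nat.pow_le_pow_right hp.pos (Nat.mul_le_mul_left e (by
        simp only [Finset.mem_range] at hi; omega))
    have h2 : p ^ (e * (h - 1)) < p ^ m := by
      apply Nat.pow_lt_pow_right hp.one_lt
      rw [hm]
      have : h - 1 < h := by omega
      exact (Nat.mul_lt_mul_left he).mpr this
    rw [hcard]; omega
  by_contra hcon
  push_neg at hcon
  apply hPne
  apply Polynomial.eq_zero_of_natDegree_lt_card_of_eval_eq_zero P Function.injective_id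
    (fun x => by rw [heval]; exact hcon x)
  simpa using hdeg

lemma relTrace_nondeg {p e h m : ℕ} {F : Type*} [Field F] [Fintype F]
    (hp : p.Prime) (he : 0 < e) (hh : 0 < h) (hm : m = e * h)
    (hcard : Fintype.card F = p ^ m) (c : F)
    (hc : ∀ x : F, relTrace p e h (x * c) = 0) : c = 0 := by
  by_contra hc0
  obtain ⟨x0, hx0⟩ := relTrace_exists_ne_zero hp he hh hm hcard
  apply hx0
  have := hc (x0 * c⁻¹)
  rwa [mul_assoc, inv_mul_cancel₀ hc0, mul_one] at this


lemma radical_linear {p e h m k : ℕ} {F : Type*} [Field F] [Fintype F]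
    [Fact p.Prime] [CharP F p]
    (hp : p.Prime) (he : 0 < e) (hhh : 0 < h) (hm : m = e * h)
    (hek : e ∣ k) (hkpos : 0 < k)
    (hcard : Fintype.card F = p ^ m)
    (hF : ∀ x : F, x ^ p ^ m = x)
    (u v z : F)
    (hz : ∀ x : F, relTrace p e h (u * (x + z) ^ (p ^ k + 1) + v * (x + z) ^ 2)
          = relTrace p e h (u * x ^ (p ^ k + 1) + v * x ^ 2)) :
    u * z ^ p ^ k + u ^ p ^ (k * (m - 1)) * z ^ p ^ (k * (m - 1)) + 2 * v * z = 0 := by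
  set K := k * (m - 1) with hK
  have hmpos : 0 < m := by rw [hm]; positivity
  have heK : e ∣ K := Dvd.dvd.mul_right hek _
  have hkK : k + K = m * k := by
    obtain ⟨n, rfl⟩ : ∃ n, m = n + 1 := ⟨m - 1, by omega⟩
    rw [hK]; simp only [Nat.add_sub_cancel]; ring
  have hiden : ∀ x : F, (u * (x + z) ^ (p ^ k + 1) + v * (x + z) ^ 2)
      - (u * x ^ (p ^ k + 1) + v * x ^ 2)
      = (u * x ^ p ^ k * z + x * (u * z ^ p ^ k + 2 * v * z))
        + (u * z ^ p ^ k * z + v * z ^ 2) := by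
    intro x
    have hxp : (x + z) ^ (p ^ k + 1) = (x ^ p ^ k + z ^ p ^ k) * (x + z) := by
      rw [pow_succ, add_pow_char_pow]
    have hxp2 : x ^ (p ^ k + 1) = x ^ p ^ k * x := by rw [pow_succ]
    rw [hxp, hxp2]; ring
  have h1 : ∀ x : F, relTrace p e h ((u * x ^ p ^ k * z + x * (u * z ^ p ^ k + 2 * v * z))
        + (u * z ^ p ^ k * z + v * z ^ 2)) = 0 := by
    intro x
    rw [← hiden, relTrace_sub, hz, sub_self]
  have h2 : relTrace p e h (u * z ^ p ^ k * z + v * z ^ 2) = 0 := by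
    have := h1 0
    have hz0 : (0:F) ^ p ^ k = 0 := zero_pow (pow_pos hp.pos k).ne'
    rw [hz0] at this
    simpa using this
  have h3 : ∀ x : F, relTrace p e h (u * x ^ p ^ k * z)
      + relTrace p e h (x * (u * z ^ p ^ k + 2 * v * z)) = 0 := by
    intro x
    have := h1 x
    rwa [relTrace_add, relTrace_add, h2, add_zero] at this
  have h4 : ∀ x : F, relTrace p e h (u * x ^ p ^ k * z)
      = relTrace p e h (x * (u ^ p ^ K * z ^ p ^ K)) := by
    intro x
    have hcalc : (u * x ^ p ^ k * z) ^ p ^ K = x * (u ^ p ^ K * z ^ p ^ K) := by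
      rw [mul_pow, mul_pow, ← pow_mul, ← pow_add, hkK, pow_pm_iter hF]
      ring
    rw [← relTrace_frob_dvd hm hF (u * x ^ p ^ k * z) heK, hcalc]
  have h5 : ∀ x : F, relTrace p e h
      (x * (u ^ p ^ K * z ^ p ^ K + (u * z ^ p ^ k + 2 * v * z))) = 0 := by
    intro x
    rw [mul_add, relTrace_add, ← h4]
    exact h3 x
  have := relTrace_nondeg hp he hhh hm hcard _ h5
  linear_combination this

lemma sign_iter {p n : ℕ} {F : Type*} [Field F] (hpodd : Odd p) (s : F)
    (hs : s ^ p ^ n = -s) (j : ℕ) : s ^ p ^ (n * j) = (-1) ^ j * s := by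
  induction j with
  | zero => simp
  | succ c ih =>
      have hstep : s ^ p ^ (n * (c + 1)) = (s ^ p ^ (n * c)) ^ p ^ n := by
        rw [← pow_mul, ← pow_add, mul_add, mul_one]
      have hodd : Odd (p ^ n) := hpodd.pow
      have h1 : ((-1 : F) ^ c) ^ p ^ n = (-1 : F) ^ c := by
        rw [← pow_mul, mul_comm, pow_mul, hodd.neg_one_pow]
      rw [hstep, ih, mul_pow, hs, h1, pow_succ]
      ring

lemma card_one_of {F : Type*} [Field F] (P : F → Prop) (h0 : P 0)
    (h1 : ∀ z, P z → z = 0) : Nat.card {z : F // P z} = 1 := by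
  rw [Nat.card_eq_one_iff_unique]
  exact ⟨⟨fun a b => Subtype.ext (by rw [h1 a a.2, h1 b b.2])⟩, ⟨⟨0, h0⟩⟩⟩

theorem one_of_Quv_Qu_neg_v_full_rank (p m k : ℕ) (hp : p.Prime) (hodd : Odd p)
    (hk : 0 < k) (e h : ℕ) (he : e = Nat.gcd k m) (hh : h = m / e)
    (hge : 3 ≤ h) (hoddh : Odd h)
    (F : Type*) [Field F] [Fintype F] (hcard : Fintype.card F = p ^ m)
    (u v : F) (huv : (u, v) ≠ (0, 0)) :
    Nat.card {z : F // ∀ x : F,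
        relTrace p e h (u * (x + z) ^ (p ^ k + 1) + v * (x + z) ^ 2)
          = relTrace p e h (u * x ^ (p ^ k + 1) + v * x ^ 2)} = 1 ∨
    Nat.card {z : F // ∀ x : F,
        relTrace p e h (u * (x + z) ^ (p ^ k + 1) - v * (x + z) ^ 2)
          = relTrace p e h (u * x ^ (p ^ k + 1) - v * x ^ 2)} = 1 := by
  haveI : Fact p.Prime := ⟨hp⟩
  -- basic numerics
  have hek : e ∣ k := he ▸ Nat.gcd_dvd_left k m
  have hem : e ∣ m := he ▸ Nat.gcd_dvd_right k m
  have hepos : 0 < e := he ▸ Nat.gcd_pos_of_pos_left m hk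
  have hm : m = e * h := by rw [hh, Nat.mul_div_cancel' hem]
  have hhh : 0 < h := by omega
  have hmpos : 0 < m := by rw [hm]; positivity
  have hm3 : 3 ≤ m := by
    rw [hm]
    calc 3 ≤ h := hge
    _ ≤ e * h := Nat.le_mul_of_pos_left h hepos
  -- characteristic
  obtain ⟨q, hq⟩ := CharP.exists F
  haveI := hq
  obtain ⟨n, hqprime, hcard'⟩ := FiniteField.card F q
  have hqp : q = p := by
    have h1 : q ∣ p ^ m := by
      rw [← hcard, hcard']
      exact dvd_pow_self q (by exact_mod_cast n.pos.ne')
    exact (Nat.prime_dvd_prime_iff_eq hqprime hp).mp (hqprime.dvd_of_dvd_pow h1)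
  haveI : CharP F p := by rwa [hqp] at hq
  have hF : ∀ x : F, x ^ p ^ m = x := fun x => by rw [← hcard]; exact FiniteField.pow_card x
  have h2ne : (2 : F) ≠ 0 := by
    intro hcontra
    have hdvd : p ∣ 2 := (CharP.cast_eq_zero_iff F p 2).mp (by exact_mod_cast hcontra)
    have := (Nat.prime_dvd_prime_iff_eq hp Nat.prime_two).mp hdvd
    obtain ⟨t, ht⟩ := hodd; omega
  set K := k * (m - 1) with hK
  have hkK : k + K = m * k := by
    obtain ⟨n', rfl⟩ : ∃ n', m = n' + 1 := ⟨m - 1, by omega⟩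
    rw [hK]; simp only [Nat.add_sub_cancel]; ring
  obtain ⟨kd, hkd⟩ := id hek
  have hzzK : ∀ w : F, (w ^ p ^ k) ^ p ^ K = w := by
    intro w
    rw [← pow_mul, ← pow_add, hkK, mul_comm m k, mul_comm, pow_pm_iter hF]
  -- the key radical computation
  have key : ∀ (w z : F),
      (∀ x : F, relTrace p e h (u * (x + z) ^ (p ^ k + 1) + w * (x + z) ^ 2)
          = relTrace p e h (u * x ^ (p ^ k + 1) + w * x ^ 2)) →
      u * z ^ p ^ k + u ^ p ^ K * z ^ p ^ K + 2 * w * z = 0 := by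
    intro w z hz
    exact radical_linear hp hepos hhh hm hek hk hcard hF u w z hz
  by_cases H : ∃ z : F, z ≠ 0 ∧ ∀ x : F,
      relTrace p e h (u * (x + z) ^ (p ^ k + 1) + v * (x + z) ^ 2)
        = relTrace p e h (u * x ^ (p ^ k + 1) + v * x ^ 2)
  · -- then the minus form has trivial radical
    right
    obtain ⟨z, hz0, hzP⟩ := H
    have eq1 := key v z hzP
    apply card_one_of
    · intro x; simp
    · intro z' hz'P
      by_contra hz'0
      have eq2 : u * z' ^ p ^ k + u ^ p ^ K * z' ^ p ^ K + 2 * (-v) * z' = 0 := by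
        apply key (-v) z'
        intro x
        have := hz'P x
        simpa [sub_eq_add_neg, neg_mul] using this
      -- case u = 0
      by_cases hu : u = 0
      · subst hu
        have hKpos : 0 < K := Nat.mul_pos hk (by omega)
        rw [zero_mul, zero_pow (pow_pos hp.pos K).ne'] at eq1
        have hv : v = 0 := by
          have h2vz : 2 * v * z = 0 := by linear_combination eq1
          rcases mul_eq_zero.mp h2vz with h' | h'
          · rcases mul_eq_zero.mp h' with h'' | h''
            · exact absurd h'' h2ne
            · exact h''
          · exact absurd h' hz0
        exact huv (by simp [hv])
      · -- u ≠ 0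
        set A : F := z ^ p ^ k * z' + z' ^ p ^ k * z with hAdef
        have hApow : A ^ p ^ K = z * z' ^ p ^ K + z' * z ^ p ^ K := by
          rw [hAdef, add_pow_char_pow, mul_pow, mul_pow, hzzK, hzzK]
        have hsum : u * A + (u * A) ^ p ^ K = 0 := by
          rw [mul_pow, hApow, hAdef]
          linear_combination z' * eq1 + z * eq2
        have hA : A = 0 := by
          by_contra hAne
          have ht0 : u * A ≠ 0 := mul_ne_zero hu hAne
          have hs : (u * A) ^ p ^ K = -(u * A) := by linear_combination hsum
          have hiter := sign_iter hodd (u * A) hs h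
          have hfix : (u * A) ^ p ^ (K * h) = u * A := by
            have : K * h = m * (kd * (m - 1)) := by
              rw [hK, hkd, hm]; ring
            rw [this, pow_pm_iter hF]
          rw [hfix, hoddh.neg_one_pow] at hiter
          have : (2 : F) * (u * A) = 0 := by linear_combination hiter
          rcases mul_eq_zero.mp this with h' | h'
          · exact h2ne h'
          · exact ht0 h'
        -- A = 0 : consider s = z' / z
        have hs : (z' * z⁻¹) ^ p ^ k = -(z' * z⁻¹) := by
          have hzne : z ≠ 0 := hz0
          have hzk : z ^ p ^ k ≠ 0 := pow_ne_zero _ hzne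
          rw [mul_pow, inv_pow]
          field_simp
          have hA' : z ^ p ^ k * z' + z' ^ p ^ k * z = 0 := by rw [← hAdef]; exact hA
          linear_combination hA'
        have hiter := sign_iter hodd (z' * z⁻¹) hs h
        have hfix : (z' * z⁻¹) ^ p ^ (k * h) = z' * z⁻¹ := by
          have : k * h = m * kd := by rw [hkd, hm]; ring
          rw [this, pow_pm_iter hF]
        rw [hfix, hoddh.neg_one_pow] at hiter
        have h2s : (2 : F) * (z' * z⁻¹) = 0 := by linear_combination hiter
        have hsne : z' * z⁻¹ ≠ 0 := mul_ne_zero hz'0 (inv_ne_zero hz0)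
        rcases mul_eq_zero.mp h2s with h' | h'
        · exact h2ne h'
        · exact hsne h'
  · -- the plus form has trivial radical
    left
    apply card_one_of
    · intro x; simp
    · intro z hzP
      by_contra hz0
      exact H ⟨z, hz0, hzP⟩
end
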